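/- Let $n \ge 1$ and let $G$ be a finite subgroup of $\mathrm{GL}_n(\mathbb{C})$. Then $G$ has an abelian normal subgroup $A$ such that the index $[G : A] \le 25^{n^2} - 9^{n^2}$. -/

import Mathlib

set_option linter.unusedSectionVars false
set_option maxHeartbeats 1000000

open Module
open scoped Matrix ComplexOrder


open MeasureTheory Metric Module ENNReal
open scoped ENNReal

/-- Packing lemma: a `1/2`-separated family of unit vectors in a `d`-dimensional real
normed space has at most `5^d - 3^d` elements (balls of radius `1/4` around the points are
disjoint and lie in the spherical shell between radii `3/4` and `5/4`). -/
lemma jordan_packing_aux {E : Type*} [NormedAddCommGroup E] [NormedSpace ℝ E]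
    [FiniteDimensional ℝ E] (hd : 0 < finrank ℝ E) (s : Finset E)
    (hnorm : ∀ x ∈ s, ‖x‖ = 1)
    (hsep : ∀ x ∈ s, ∀ y ∈ s, x ≠ y → 1/2 ≤ ‖x - y‖) :
    s.card ≤ 5 ^ finrank ℝ E - 3 ^ finrank ℝ E := by
  classical
  borelize E
  haveI : Nontrivial E := nontrivial_of_finrank_pos hd
  set d := finrank ℝ E with hdd
  set μ : Measure E := (Module.finBasis ℝ E).addHaar with hμ
  set v := μ (ball (0:E) 1) with hv
  have hv0 : v ≠ 0 := (measure_ball_pos μ 0 one_pos).ne'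
  have hvt : v ≠ ⊤ := measure_ball_lt_top.ne
  -- disjointness of the small balls
  have hdisj : (s : Set E).PairwiseDisjoint (fun x => ball x (4⁻¹ : ℝ)) := by
    intro x hx y hy hxy
    apply Set.disjoint_left.2
    intro z hzx hzy
    have h1 : dist z x < 4⁻¹ := mem_ball.1 hzx
    have h2 : dist z y < 4⁻¹ := mem_ball.1 hzy
    have h3 : dist x y ≤ dist x z + dist z y := dist_triangle x z y
    rw [dist_comm z x] at h1
    have h4 : (1:ℝ)/2 ≤ dist x y := by rw [dist_eq_norm]; exact hsep x hx y hy hxy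
    linarith
  -- measures of the balls
  have hball : ∀ (x : E) (r : ℝ), 0 ≤ r →
      μ (ball x r) = ENNReal.ofReal (r ^ d) * v :=
    fun x r hr => Measure.addHaar_ball μ x hr
  -- the union of the small balls
  have hUmeas : μ (⋃ x ∈ s, ball x (4⁻¹ : ℝ)) = s.card * (ENNReal.ofReal ((4⁻¹:ℝ) ^ d) * v) := by
    rw [measure_biUnion_finset hdisj (fun x _ => measurableSet_ball)]
    rw [Finset.sum_congr rfl (fun x _ => hball x _ (by norm_num))]
    rw [Finset.sum_const, nsmul_eq_mul]
  -- the union is disjoint from the inner ball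
  have hdisj2 : Disjoint (⋃ x ∈ s, ball x (4⁻¹ : ℝ)) (ball (0:E) (3/4)) := by
    apply Set.disjoint_left.2
    intro z hz hz0
    simp only [Set.mem_iUnion] at hz
    obtain ⟨x, hx, hzx⟩ := hz
    have h1 : dist z x < 4⁻¹ := mem_ball.1 hzx
    have h2 : dist z (0:E) < 3/4 := mem_ball.1 hz0
    have h3 : dist x (0:E) ≤ dist x z + dist z 0 := dist_triangle x z 0
    rw [dist_comm z x] at h1
    have hx1 : dist x (0:E) = 1 := by rw [dist_zero_right]; exact hnorm x hx
    linarith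
  -- the union and the inner ball are inside the big ball
  have hsub : (⋃ x ∈ s, ball x (4⁻¹ : ℝ)) ∪ ball (0:E) (3/4) ⊆ ball (0:E) (5/4) := by
    intro z hz
    rcases hz with hz | hz
    · simp only [Set.mem_iUnion] at hz
      obtain ⟨x, hx, hzx⟩ := hz
      have h1 : dist z x < 4⁻¹ := mem_ball.1 hzx
      have hx1 : dist x (0:E) = 1 := by rw [dist_zero_right]; exact hnorm x hx
      have h3 : dist z (0:E) ≤ dist z x + dist x 0 := dist_triangle z x 0
      exact mem_ball.2 (by linarith)
    · exact ball_subset_ball (by norm_num) hz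
  have hmeasle : μ ((⋃ x ∈ s, ball x (4⁻¹ : ℝ)) ∪ ball (0:E) (3/4)) ≤ μ (ball (0:E) (5/4)) :=
    measure_mono hsub
  rw [measure_union hdisj2 measurableSet_ball, hUmeas, hball 0 (3/4) (by norm_num),
    hball 0 (5/4) (by norm_num)] at hmeasle
  -- cancel v
  have hkey : (s.card : ℝ≥0∞) * ENNReal.ofReal ((4⁻¹:ℝ) ^ d) + ENNReal.ofReal ((3/4:ℝ) ^ d)
      ≤ ENNReal.ofReal ((5/4:ℝ) ^ d) := by
    rw [← ENNReal.mul_le_mul_iff_left hv0 hvt]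
    calc ((s.card : ℝ≥0∞) * ENNReal.ofReal ((4⁻¹:ℝ) ^ d) + ENNReal.ofReal ((3/4:ℝ) ^ d)) * v
        = (s.card : ℝ≥0∞) * (ENNReal.ofReal ((4⁻¹:ℝ) ^ d) * v)
          + ENNReal.ofReal ((3/4:ℝ) ^ d) * v := by ring
      _ ≤ ENNReal.ofReal ((5/4:ℝ) ^ d) * v := hmeasle
  -- to real numbers
  have hreal : (s.card : ℝ) * (4⁻¹:ℝ) ^ d + (3/4:ℝ) ^ d ≤ (5/4:ℝ) ^ d := by
    have := hkey
    rw [show ((s.card : ℝ≥0∞)) = ENNReal.ofReal (s.card : ℝ) by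
        rw [ENNReal.ofReal_natCast], ← ENNReal.ofReal_mul (by positivity),
      ← ENNReal.ofReal_add (by positivity) (by positivity)] at this
    exact (ENNReal.ofReal_le_ofReal_iff (by positivity)).1 this
  -- clean up the real inequality
  have h4d : (0:ℝ) < 4 ^ d := by positivity
  have hnat : (s.card : ℝ) + 3 ^ d ≤ 5 ^ d := by
    have expand : ((s.card : ℝ) + 3 ^ d) * (4⁻¹:ℝ) ^ d ≤ (5:ℝ)^d * (4⁻¹:ℝ)^d := by
      calc ((s.card : ℝ) + 3 ^ d) * (4⁻¹:ℝ) ^ d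
          = (s.card : ℝ) * (4⁻¹:ℝ) ^ d + (3 * 4⁻¹ : ℝ) ^ d := by rw [mul_pow]; ring
        _ ≤ (5/4:ℝ) ^ d := by rw [show (3 * 4⁻¹ : ℝ) = 3/4 by norm_num]; exact hreal
        _ = (5:ℝ)^d * (4⁻¹:ℝ)^d := by rw [← mul_pow]; norm_num
    have hp : (0:ℝ) < (4⁻¹:ℝ) ^ d := by positivity
    exact le_of_mul_le_mul_right expand hp
  have h35 : (3:ℕ) ^ d ≤ 5 ^ d := Nat.pow_le_pow_left (by norm_num) d
  have : (s.card : ℝ) ≤ ((5 ^ d - 3 ^ d : ℕ) : ℝ) := by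
    rw [Nat.cast_sub h35]
    push_cast
    linarith
  exact_mod_cast this


open Finset

section KeyLemma

variable {G : Type*} [Group G] [Finite G] {E : Type*} [NormedRing E] [StarRing E]
  [CStarRing E] [NormedSpace ℝ E] [IsScalarTower ℝ E E] [SMulCommClass ℝ E E]
  (f : G →* E) (hf : Function.Injective f) (hu : ∀ g : G, f g ∈ unitary E)

include hu in
/-- Conjugation by a group element does not change `‖f · - 1‖`. -/
lemma jordan_norm_conj (u x : G) : ‖f (u * x * u⁻¹) - 1‖ = ‖f x - 1‖ := by
  have key : f (u * x * u⁻¹) - 1 = f u * ((f x - 1) * f u⁻¹) := by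
    have h1 : f u * f u⁻¹ = 1 := by rw [← map_mul, mul_inv_cancel, map_one]
    calc f (u * x * u⁻¹) - 1 = f u * f x * f u⁻¹ - f u * f u⁻¹ := by
          rw [map_mul, map_mul, h1]
      _ = f u * ((f x - 1) * f u⁻¹) := by noncomm_ring
  rw [key, CStarRing.norm_mem_unitary_mul _ (hu u), CStarRing.norm_mul_mem_unitary _ (hu u⁻¹)]

include hu in
/-- The commutator shrinking inequality for unitary elements. -/
lemma jordan_norm_commutator (x y : G) :
    ‖f (x * y * x⁻¹ * y⁻¹) - 1‖ ≤ 2 * ‖f x - 1‖ * ‖f y - 1‖ := by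
  have h1 : f (y * x) * f ((y * x)⁻¹) = 1 := by rw [← map_mul, mul_inv_cancel, map_one]
  have key : f (x * y * x⁻¹ * y⁻¹) - 1 = (f (x * y) - f (y * x)) * f ((y * x)⁻¹) := by
    have h2 : x * y * x⁻¹ * y⁻¹ = (x * y) * (y * x)⁻¹ := by group
    rw [h2, map_mul, sub_mul, h1]
  have h3 : ‖f (x * y * x⁻¹ * y⁻¹) - 1‖ = ‖f (x * y) - f (y * x)‖ := by
    rw [key, CStarRing.norm_mul_mem_unitary _ (hu (y * x)⁻¹)]
  have h4 : f (x * y) - f (y * x) = (f x - 1) * (f y - 1) - (f y - 1) * (f x - 1) := by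
    rw [map_mul, map_mul]; noncomm_ring
  rw [h3, h4]
  calc ‖(f x - 1) * (f y - 1) - (f y - 1) * (f x - 1)‖
      ≤ ‖(f x - 1) * (f y - 1)‖ + ‖(f y - 1) * (f x - 1)‖ := norm_sub_le _ _
    _ ≤ ‖f x - 1‖ * ‖f y - 1‖ + ‖f y - 1‖ * ‖f x - 1‖ :=
        add_le_add (norm_mul_le _ _) (norm_mul_le _ _)
    _ = 2 * ‖f x - 1‖ * ‖f y - 1‖ := by ring

include hf hu in
/-- Any two elements that are within distance `1/2` of the identity commute. -/
lemma jordan_commute_of_small : ∀ x y : G, ‖f x - 1‖ < 1/2 → ‖f y - 1‖ < 1/2 →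
    Commute x y := by
  classical
  letI : Fintype G := Fintype.ofFinite G
  by_contra hcon
  push_neg at hcon
  set T : Finset (G × G) := Finset.univ.filter
    (fun p : G × G => ‖f p.1 - 1‖ < 1/2 ∧ ‖f p.2 - 1‖ < 1/2 ∧ ¬ Commute p.1 p.2) with hT
  have hTne : T.Nonempty := by
    obtain ⟨x, y, hx, hy, hxy⟩ := hcon
    exact ⟨(x, y), Finset.mem_filter.2 ⟨Finset.mem_univ _, hx, hy, hxy⟩⟩
  obtain ⟨p, hpT, hmin⟩ := T.exists_min_image (fun p => ‖f p.1 - 1‖ + ‖f p.2 - 1‖) hTne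
  obtain ⟨x, y⟩ := p
  rw [hT, Finset.mem_filter] at hpT
  obtain ⟨-, hx, hy, hxy⟩ := hpT
  -- basic positivity facts
  have hfy0 : 0 < ‖f y - 1‖ := by
    rcases eq_or_ne y 1 with rfl | hy1
    · exact absurd (Commute.one_right x) hxy
    · have : f y - 1 ≠ 0 := sub_ne_zero.2 fun h => hy1 (hf (h.trans (map_one f).symm))
      exact norm_pos_iff.2 this
  -- the commutator
  set c : G := x * y * x⁻¹ * y⁻¹ with hc
  have hc1 : c ≠ 1 := by
    intro h
    exact hxy (commutatorElement_eq_one_iff_commute.1 (by rw [commutatorElement_def, ← hc, h]))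
  have hcnorm : ‖f c - 1‖ ≤ 2 * ‖f x - 1‖ * ‖f y - 1‖ := jordan_norm_commutator f hu x y
  have hcsmall : ‖f c - 1‖ < 1/2 := by nlinarith
  have hclty : ‖f c - 1‖ < ‖f y - 1‖ := by nlinarith
  -- minimality: x commutes with c
  have hxc : Commute x c := by
    by_contra hnc
    have hmem : (x, c) ∈ T := Finset.mem_filter.2 ⟨Finset.mem_univ _, hx, hcsmall, hnc⟩
    have := hmin (x, c) hmem
    simp only at this
    linarith
  -- the conjugation relation x * y * x⁻¹ = c * y
  have hrel : x * y * x⁻¹ = c * y := by rw [hc]; group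
  -- iterate: x^k * y * x^(-k) = c^k * y
  have hiter : ∀ k : ℕ, x ^ k * y * (x ^ k)⁻¹ = c ^ k * y := by
    intro k
    induction k with
    | zero => simp
    | succ k ih =>
      have hxck : x * c ^ k = c ^ k * x := (hxc.pow_right k).eq
      calc x ^ (k+1) * y * (x ^ (k+1))⁻¹ = x * (x ^ k * y * (x ^ k)⁻¹) * x⁻¹ := by
            rw [pow_succ']; group
        _ = x * (c ^ k * y) * x⁻¹ := by rw [ih]
        _ = c ^ k * (x * y * x⁻¹) := by rw [← mul_assoc, hxck]; group
        _ = c ^ (k+1) * y := by rw [hrel, pow_succ']; group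
  -- hence all powers of c are within 2‖f y - 1‖ of 1
  have hpow : ∀ k : ℕ, ‖f (c ^ k) - 1‖ ≤ 2 * ‖f y - 1‖ := by
    intro k
    have h1 : ‖f (c ^ k * y) - 1‖ = ‖f y - 1‖ := by
      rw [← hiter k]
      exact jordan_norm_conj f hu (x ^ k) y
    have h2 : f (c ^ k) - 1 = (f (c ^ k * y) - f y) * f y⁻¹ := by
      have hy1 : f y * f y⁻¹ = 1 := by rw [← map_mul, mul_inv_cancel, map_one]
      rw [map_mul, sub_mul, mul_assoc, hy1, mul_one]
    rw [h2, CStarRing.norm_mul_mem_unitary _ (hu y⁻¹)]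
    calc ‖f (c ^ k * y) - f y‖ ≤ ‖f (c ^ k * y) - 1‖ + ‖1 - f y‖ := by
          have : f (c ^ k * y) - f y = (f (c ^ k * y) - 1) + (1 - f y) := by abel
          rw [this]; exact norm_add_le _ _
      _ ≤ ‖f y - 1‖ + ‖f y - 1‖ := by rw [h1, norm_sub_rev]
      _ = 2 * ‖f y - 1‖ := by ring
  -- averaging argument: P = (1/N) ∑ (f c)^k is an idempotent close to 1
  set N : ℕ := orderOf c with hN
  have hN0 : 0 < N := orderOf_pos c
  have hcN : (f c) ^ N = 1 := by rw [← map_pow, pow_orderOf_eq_one, map_one]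
  set SS : E := ∑ k ∈ Finset.range N, (f c) ^ k with hSSdef
  have hstep : f c * SS = SS := by
    have h1 : f c * SS = ∑ k ∈ Finset.range N, (f c) ^ (k + 1) := by
      rw [hSSdef, Finset.mul_sum]
      exact Finset.sum_congr rfl fun k _ => (pow_succ' (f c) k).symm
    have h2 : (∑ k ∈ Finset.range N, (f c) ^ (k+1)) + (f c) ^ 0 =
        (∑ k ∈ Finset.range N, (f c) ^ k) + (f c) ^ N := by
      rw [← Finset.sum_range_succ' (fun k => (f c) ^ k) N, Finset.sum_range_succ]
    rw [h1]
    have h3 : (f c) ^ 0 = (f c) ^ N := by rw [pow_zero, hcN]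
    rw [h3] at h2
    exact add_right_cancel h2
  have hstepk : ∀ k : ℕ, (f c) ^ k * SS = SS := by
    intro k
    induction k with
    | zero => simp
    | succ k ih => rw [pow_succ, mul_assoc, hstep, ih]
  have hSS : SS * SS = (N : ℝ) • SS := by
    rw [hSSdef, Finset.sum_mul]
    rw [Finset.sum_congr rfl (fun k _ => hstepk k)]
    rw [Finset.sum_const, Finset.card_range, ← Nat.cast_smul_eq_nsmul (R := ℝ)]
  -- the averaged idempotent
  set P : E := (N : ℝ)⁻¹ • SS with hP
  have hNne : ((N : ℝ)) ≠ 0 := Nat.cast_ne_zero.2 hN0.ne'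
  have hPP : P * P = P := by
    rw [hP, smul_mul_assoc, mul_smul_comm, hSS, smul_smul, smul_smul]
    congr 1
    field_simp
  have hcP : f c * P = P := by rw [hP, mul_smul_comm, hstep]
  -- 1 - P has small norm
  have hQnorm : ‖1 - P‖ < 1 := by
    have h1 : (1 : E) - P = (N : ℝ)⁻¹ • ((N : ℝ) • (1 : E) - SS) := by
      rw [smul_sub, smul_smul, inv_mul_cancel₀ hNne, one_smul]
    have h2 : (N : ℝ) • (1 : E) - SS = ∑ k ∈ Finset.range N, (1 - (f c) ^ k) := by
      rw [Finset.sum_sub_distrib, Finset.sum_const, Finset.card_range,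
        ← Nat.cast_smul_eq_nsmul (R := ℝ)]
    have h3 : ‖(N : ℝ) • (1 : E) - SS‖ ≤ (N : ℝ) * (2 * ‖f y - 1‖) := by
      rw [h2]
      calc ‖∑ k ∈ Finset.range N, (1 - (f c) ^ k)‖
          ≤ ∑ k ∈ Finset.range N, ‖1 - (f c) ^ k‖ := norm_sum_le _ _
        _ ≤ ∑ _k ∈ Finset.range N, (2 * ‖f y - 1‖) := by
            apply Finset.sum_le_sum
            intro k _
            rw [norm_sub_rev, ← map_pow]
            exact hpow k
        _ = (N : ℝ) * (2 * ‖f y - 1‖) := by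
            rw [Finset.sum_const, Finset.card_range, nsmul_eq_mul]
    calc ‖(1 : E) - P‖ = ‖(N : ℝ)⁻¹‖ * ‖(N : ℝ) • (1 : E) - SS‖ := by rw [h1, norm_smul]
      _ ≤ (N : ℝ)⁻¹ * ((N : ℝ) * (2 * ‖f y - 1‖)) := by
          rw [Real.norm_eq_abs, abs_of_nonneg (by positivity)]
          exact mul_le_mul_of_nonneg_left h3 (by positivity)
      _ = 2 * ‖f y - 1‖ := by field_simp
      _ < 1 := by linarith
  -- idempotents of norm < 1 vanish
  have hQ : (1 : E) - P = 0 := by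
    set Q : E := 1 - P with hQdef
    have hQQ : Q * Q = Q := by
      rw [hQdef]
      calc (1 - P) * (1 - P) = 1 - P - P + P * P := by noncomm_ring
        _ = 1 - P := by rw [hPP]; abel
    by_contra hQ0
    have h0 : 0 < ‖Q‖ := norm_pos_iff.2 hQ0
    have h1 : ‖Q‖ ≤ ‖Q‖ * ‖Q‖ := by
      conv_lhs => rw [← hQQ]
      exact norm_mul_le _ _
    have h2 : 1 ≤ ‖Q‖ := by nlinarith
    have h3 : ‖Q‖ < 1 := hQnorm
    linarith
  have hPone : P = (1 : E) := by
    have := hQ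
    rwa [sub_eq_zero, eq_comm] at this
  have : f c = 1 := by
    have h5 : f c = f c * P := by rw [hPone, mul_one]
    rw [h5, hcP, hPone]
  exact hc1 (hf (this.trans (map_one f).symm))
end KeyLemma



section Setup
variable (n : ℕ)

local notation "H" => EuclideanSpace ℂ (Fin n)
local notation "E" => H →L[ℂ] H

lemma jordan_finrank_E : finrank ℝ (EuclideanSpace ℂ (Fin n) →L[ℂ] EuclideanSpace ℂ (Fin n))
    = 2 * n ^ 2 := by
  have h1 : finrank ℂ (EuclideanSpace ℂ (Fin n) →L[ℂ] EuclideanSpace ℂ (Fin n)) = n ^ 2 := by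
    have e : Matrix (Fin n) (Fin n) ℂ ≃ₗ[ℂ]
        (EuclideanSpace ℂ (Fin n) →L[ℂ] EuclideanSpace ℂ (Fin n)) :=
      Matrix.toEuclideanLin.trans LinearMap.toContinuousLinearMap
    rw [← e.finrank_eq, finrank_matrix]
    simp [sq]
  have h2 := Module.finrank_mul_finrank ℝ ℂ
    (EuclideanSpace ℂ (Fin n) →L[ℂ] EuclideanSpace ℂ (Fin n))
  rw [h1, Complex.finrank_real_complex] at h2
  omega

end Setup

section Unitarize

variable {n : ℕ} (G : Subgroup (Matrix.GeneralLinearGroup (Fin n) ℂ)) [Finite G]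

/-- Weyl's unitarian trick: a finite subgroup of `GL n ℂ` embeds into the unitary
group of operators on Euclidean space. -/
lemma jordan_exists_unitary_embedding :
    ∃ f : G →* (EuclideanSpace ℂ (Fin n) →L[ℂ] EuclideanSpace ℂ (Fin n)),
      Function.Injective f ∧ ∀ g : G,
        f g ∈ unitary (EuclideanSpace ℂ (Fin n) →L[ℂ] EuclideanSpace ℂ (Fin n)) := by
  classical
  letI : Fintype G := Fintype.ofFinite G
  set ee := Matrix.toEuclideanCLM (n := Fin n) (𝕜 := ℂ) with hee
  set M : G → Matrix (Fin n) (Fin n) ℂ :=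
    fun g => ((g : Matrix.GeneralLinearGroup (Fin n) ℂ) : Matrix (Fin n) (Fin n) ℂ) with hM
  have hMmul : ∀ g h : G, M (g * h) = M g * M h := fun g h => rfl
  have hMone : M 1 = 1 := rfl
  set S : Matrix (Fin n) (Fin n) ℂ := ∑ g : G, (M g)ᴴ * M g with hSdef
  -- S is positive definite
  have hSpd : S.PosDef := by
    have hsplit : S = (M 1)ᴴ * M 1 + ∑ g ∈ Finset.univ.erase 1, (M g)ᴴ * M g := by
      rw [hSdef]
      exact (Finset.add_sum_erase _ _ (Finset.mem_univ (1 : G))).symm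
    rw [hsplit, hMone, Matrix.conjTranspose_one, Matrix.one_mul]
    refine Matrix.PosDef.add_posSemidef Matrix.PosDef.one ?_
    exact Finset.sum_induction _ Matrix.PosSemidef
      (fun a b ha hb => ha.add hb) Matrix.PosSemidef.zero
      (fun g _ => Matrix.posSemidef_conjTranspose_mul_self (M g))
  -- S is G-invariant
  have hinvar : ∀ h : G, (M h)ᴴ * S * M h = S := by
    intro h
    have h1 : (M h)ᴴ * S * M h = ∑ g : G, (M (g * h))ᴴ * M (g * h) := by
      rw [hSdef, Finset.mul_sum, Finset.sum_mul]
      refine Finset.sum_congr rfl fun g _ => ?_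
      rw [hMmul, Matrix.conjTranspose_mul]
      simp only [Matrix.mul_assoc]
    rw [h1, hSdef]
    exact Fintype.sum_equiv (Equiv.mulRight h) _ _ (fun g => rfl)
  -- the positive square root of S
  open MatrixOrder in
  set P : Matrix (Fin n) (Fin n) ℂ := CFC.sqrt S with hPdef
  open MatrixOrder in
  have hP2 : P * P = S := CFC.sqrt_mul_sqrt_self S hSpd.posSemidef.nonneg
  open MatrixOrder in
  have hPH : Pᴴ = P := (Matrix.nonneg_iff_posSemidef.1 (CFC.sqrt_nonneg S)).1
  have hPdet : IsUnit P.det := by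
    have h1 : IsUnit S.det := hSpd.det_pos.ne'.isUnit
    rw [← hP2, Matrix.det_mul] at h1
    exact isUnit_of_mul_isUnit_left h1
  have hPP' : P * P⁻¹ = 1 := Matrix.mul_nonsing_inv P hPdet
  have hP'P : P⁻¹ * P = 1 := Matrix.nonsing_inv_mul P hPdet
  have hP'H : (P⁻¹)ᴴ = P⁻¹ := by rw [Matrix.conjTranspose_nonsing_inv, hPH]
  -- conjugation cancellation
  have hconj : ∀ A B : Matrix (Fin n) (Fin n) ℂ,
      (P * A * P⁻¹) * (P * B * P⁻¹) = P * (A * B) * P⁻¹ := by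
    intro A B
    calc (P * A * P⁻¹) * (P * B * P⁻¹) = P * (A * ((P⁻¹ * P) * (B * P⁻¹))) := by
          simp only [Matrix.mul_assoc]
      _ = P * (A * B) * P⁻¹ := by rw [hP'P, Matrix.one_mul]; simp only [Matrix.mul_assoc]
  -- the embedding
  refine ⟨{ toFun := fun g => ee (P * M g * P⁻¹)
            map_one' := by
              show ee (P * M 1 * P⁻¹) = 1
              rw [hMone, Matrix.mul_one, hPP', map_one]
            map_mul' := fun g h => by
              show ee (P * M (g * h) * P⁻¹) = ee (P * M g * P⁻¹) * ee (P * M h * P⁻¹)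
              rw [hMmul, ← hconj, map_mul] }, ?_, ?_⟩
  · -- injectivity
    intro g h hgh
    have h1 : P * M g * P⁻¹ = P * M h * P⁻¹ := ee.injective hgh
    have cancel : ∀ A : Matrix (Fin n) (Fin n) ℂ, P⁻¹ * (P * A * P⁻¹) * P = A := by
      intro A
      calc P⁻¹ * (P * A * P⁻¹) * P = (P⁻¹ * P) * (A * (P⁻¹ * P)) := by
            simp only [Matrix.mul_assoc]
        _ = A := by rw [hP'P, Matrix.one_mul, Matrix.mul_one]
    have h2 : M g = M h := by rw [← cancel (M g), h1, cancel]
    exact Subtype.ext (Units.ext h2)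
  · -- unitarity
    intro g
    show ee (P * M g * P⁻¹) ∈ unitary _
    have hstar : star (ee (P * M g * P⁻¹)) = ee (P⁻¹ * (M g)ᴴ * P) := by
      rw [← map_star]
      congr 1
      rw [Matrix.star_eq_conjTranspose]
      calc (P * M g * P⁻¹)ᴴ = (P⁻¹)ᴴ * ((M g)ᴴ * Pᴴ) := by
            rw [Matrix.conjTranspose_mul, Matrix.conjTranspose_mul]
        _ = P⁻¹ * (M g)ᴴ * P := by rw [hP'H, hPH, Matrix.mul_assoc]
    have hleft : star (ee (P * M g * P⁻¹)) * ee (P * M g * P⁻¹) = 1 := by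
      rw [hstar, ← map_mul]
      have e1 : (P⁻¹ * (M g)ᴴ * P) * (P * M g * P⁻¹) = P⁻¹ * ((M g)ᴴ * S * M g) * P⁻¹ := by
        rw [← hP2]
        simp only [Matrix.mul_assoc]
      rw [e1, hinvar g, ← hP2]
      have e2 : P⁻¹ * (P * P) * P⁻¹ = (P⁻¹ * P) * (P * P⁻¹) := by
        simp only [Matrix.mul_assoc]
      rw [e2, hP'P, Matrix.one_mul, hPP', map_one]
    rw [Unitary.mem_iff]
    refine ⟨hleft, ?_⟩
    have hright : ee (P * M g * P⁻¹) * ee (P * M g⁻¹ * P⁻¹) = 1 := by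
      rw [← map_mul, hconj, ← hMmul, mul_inv_cancel, hMone, Matrix.mul_one, hPP', map_one]
    have : star (ee (P * M g * P⁻¹)) = ee (P * M g⁻¹ * P⁻¹) :=
      left_inv_eq_right_inv hleft hright
    rw [this, hright]

end Unitarize


/-- Jordan's theorem with the sharpened bound `25 ^ n ^ 2 - 9 ^ n ^ 2`:
every finite subgroup `G` of `GL n ℂ` has an abelian normal subgroup `A`
with index `[G : A] ≤ 25 ^ n ^ 2 - 9 ^ n ^ 2`. -/
theorem jordan_25_minus_9 (n : ℕ) (hn : 1 ≤ n)
    (G : Subgroup (Matrix.GeneralLinearGroup (Fin n) ℂ)) [Finite G] :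
    ∃ A : Subgroup G, A.Normal ∧ IsMulCommutative A ∧
      A.index ≤ 25 ^ n ^ 2 - 9 ^ n ^ 2 := by
  classical
  obtain ⟨f, hfinj, hfu⟩ := jordan_exists_unitary_embedding G
  haveI : Nonempty (Fin n) := ⟨⟨0, hn⟩⟩
  haveI hHnt : Nontrivial (EuclideanSpace ℂ (Fin n)) := inferInstance
  haveI hEnt : Nontrivial (EuclideanSpace ℂ (Fin n) →L[ℂ] EuclideanSpace ℂ (Fin n)) := by
    obtain ⟨v, hv⟩ := exists_ne (0 : EuclideanSpace ℂ (Fin n))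
    refine ⟨1, 0, fun h => hv ?_⟩
    have := congrArg (fun T : EuclideanSpace ℂ (Fin n) →L[ℂ] EuclideanSpace ℂ (Fin n) => T v) h
    simpa using this
  set Sgen : Set G := {g : G | ‖f g - 1‖ < 1/2} with hSgen
  set A : Subgroup G := Subgroup.closure Sgen with hA
  -- commutativity of A
  have hcomm : ∀ x ∈ A, ∀ y ∈ A, Commute x y := by
    intro x hx y hy
    induction hx, hy using Subgroup.closure_induction₂ with
    | mem a b ha hb => exact jordan_commute_of_small f hfinj hfu a b ha hb
    | one_left b hb => exact Commute.one_left b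
    | one_right a ha => exact Commute.one_right a
    | mul_left a b c _ _ _ h1 h2 => exact h1.mul_left h2
    | mul_right a b c _ _ _ h1 h2 => exact h1.mul_right h2
    | inv_left a b _ _ h => exact h.inv_left
    | inv_right a b _ _ h => exact h.inv_right
  -- normality of A
  have hnormal : A.Normal := by
    constructor
    intro x hx g
    induction hx using Subgroup.closure_induction with
    | mem s hs =>
      refine Subgroup.subset_closure ?_
      show ‖f (g * s * g⁻¹) - 1‖ < 1/2
      rw [jordan_norm_conj f hfu g s]
      exact hs
    | one => simpa using A.one_mem
    | mul a b _ _ iha ihb =>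
      have h1 : g * (a * b) * g⁻¹ = (g * a * g⁻¹) * (g * b * g⁻¹) := by group
      rw [h1]; exact A.mul_mem iha ihb
    | inv a _ iha =>
      have h1 : g * a⁻¹ * g⁻¹ = (g * a * g⁻¹)⁻¹ := by group
      rw [h1]; exact A.inv_mem iha
  refine ⟨A, hnormal, ⟨⟨fun a b => Subtype.ext ((hcomm a a.2 b b.2).eq)⟩⟩, ?_⟩
  -- the index bound via packing
  haveI : Finite (G ⧸ A) := Quotient.finite _
  letI : Fintype (G ⧸ A) := Fintype.ofFinite _
  set rep : (G ⧸ A) → (EuclideanSpace ℂ (Fin n) →L[ℂ] EuclideanSpace ℂ (Fin n)) :=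
    fun q => f q.out with hrep
  have hout : ∀ q : G ⧸ A, ((q.out : G) : G ⧸ A) = q := fun q => QuotientGroup.out_eq' q
  have hsep : ∀ q1 q2 : G ⧸ A, q1 ≠ q2 → 1/2 ≤ ‖rep q1 - rep q2‖ := by
    intro q1 q2 hne
    set x : G := q1.out with hx
    set y : G := q2.out with hy
    have hxy : x⁻¹ * y ∉ A := by
      intro hmem
      exact hne (by rw [← hout q1, ← hout q2]; exact (QuotientGroup.eq (s := A)).2 hmem)
    have hnot : x⁻¹ * y ∉ Sgen := fun hs => hxy (Subgroup.subset_closure hs)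
    have h2 : 1/2 ≤ ‖f (x⁻¹ * y) - 1‖ := le_of_not_gt hnot
    have h3 : f x * (1 - f (x⁻¹ * y)) = f x - f y := by
      rw [mul_sub, mul_one, ← map_mul]
      congr 2
      group
    calc (1:ℝ)/2 ≤ ‖f (x⁻¹ * y) - 1‖ := h2
      _ = ‖1 - f (x⁻¹ * y)‖ := norm_sub_rev _ _
      _ = ‖f x * (1 - f (x⁻¹ * y))‖ := (CStarRing.norm_mem_unitary_mul _ (hfu x)).symm
      _ = ‖f x - f y‖ := by rw [h3]
  have hinj : Function.Injective rep := by
    intro q1 q2 h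
    by_contra hne
    have h1 := hsep q1 q2 hne
    rw [h, sub_self, norm_zero] at h1
    linarith
  set pts : Finset (EuclideanSpace ℂ (Fin n) →L[ℂ] EuclideanSpace ℂ (Fin n)) :=
    Finset.univ.image rep with hpts
  have hcard : pts.card = A.index := by
    rw [hpts, Finset.card_image_of_injective _ hinj, Finset.card_univ,
      Subgroup.index_eq_card, Nat.card_eq_fintype_card]
  have hd : 0 < finrank ℝ (EuclideanSpace ℂ (Fin n) →L[ℂ] EuclideanSpace ℂ (Fin n)) := by
    rw [jordan_finrank_E n]
    have : 0 < n := hn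
    positivity
  have hb := jordan_packing_aux hd pts ?_ ?_
  · rw [jordan_finrank_E n, hcard] at hb
    calc A.index ≤ 5 ^ (2 * n ^ 2) - 3 ^ (2 * n ^ 2) := hb
      _ = 25 ^ n ^ 2 - 9 ^ n ^ 2 := by
          rw [pow_mul, pow_mul]
          norm_num
  · -- unit norms
    intro x hxmem
    rw [hpts] at hxmem
    obtain ⟨q, -, rfl⟩ := Finset.mem_image.1 hxmem
    exact CStarRing.norm_of_mem_unitary (hfu _)
  · -- separation
    intro x hxmem y hymem hne
    rw [hpts] at hxmem hymem
    obtain ⟨q1, -, rfl⟩ := Finset.mem_image.1 hxmem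
    obtain ⟨q2, -, rfl⟩ := Finset.mem_image.1 hymem
    exact hsep q1 q2 (fun h => hne (by rw [h]))
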